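/- In the amalgamation setting: (a) every sequence ⟨aₖ⟩ ∈ Cₙ (for any n) has no lower bound in (A_t, <_t); (b) the diagonal sequence ⟨uₖ⟩ defined by u_{2n} = aⁿₙ and u_{2n+1} = bⁿₙ is strictly <_t-descending (u_{k+1} <_t u_k for all k) and has no lower bound in (A_t, <_t). -/

import Mathlib

open Cardinal Set

noncomputable section

/-- A partial function from ordinals to ordinals, represented by its graph. -/
abbrev ColFun := Set (Ordinal × Ordinal)

/-- `q ∈ Col(X)`: `q` is (the graph of) a function whose domain is an ordinal `< ω₁`
and whose range is a subset of `X`. -/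
def IsColFun (X : Set Ordinal) (q : ColFun) : Prop :=
  (∀ a b b', (a, b) ∈ q → (a, b') ∈ q → b = b') ∧
  (∃ δ : Ordinal, δ < (aleph 1).ord ∧ ∀ a : Ordinal, (∃ b, (a, b) ∈ q) ↔ a < δ) ∧
  (∀ a b, (a, b) ∈ q → b ∈ X)

/-- A quadruple `((A, <), B, C, F)`; `F` is a partial function represented by its graph. -/
structure Quad where
  A : Set Ordinal
  lt : Ordinal → Ordinal → Prop
  B : Set (Ordinal × ColFun)
  C : Set (ℕ → Ordinal)
  F : Set ((ℕ → Ordinal) × (Ordinal × ColFun) × ℕ)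

namespace Quad

/-- `x ≤ᵣ y`. -/
def leR (r : Quad) (x y : Ordinal) : Prop := r.lt x y ∨ x = y

/-- `x ⊥ᵣ y`: no `z ∈ Aᵣ` with `z ≤ᵣ x` and `z ≤ᵣ y`. -/
def Incomp (r : Quad) (x y : Ordinal) : Prop := ¬ ∃ z ∈ r.A, r.leR z x ∧ r.leR z y

/-- `r` is a forcing condition. -/
def IsCond (r : Quad) : Prop :=
  -- (1) A is a countable set of ordinals < ω₂
  r.A.Countable ∧
  (∀ a ∈ r.A, a < (aleph 2).ord) ∧
  -- (2) <ᵣ is a strict partial order on A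
  (∀ a b, r.lt a b → a ∈ r.A ∧ b ∈ r.A) ∧
  (∀ a b c, r.lt a b → r.lt b c → r.lt a c) ∧
  -- (3) b <ᵣ a implies a < b (whence <ᵣ is irreflexive and asymmetric)
  (∀ a b, r.lt b a → a < b) ∧
  -- (4) B is a countable subset of A × Col(A) with p ∈ range q for (p,q) ∈ B
  r.B.Countable ∧
  (∀ pq ∈ r.B, pq.1 ∈ r.A ∧ IsColFun r.A pq.2 ∧ ∃ α, (α, pq.1) ∈ pq.2) ∧
  -- (5) C is a countable set of <ᵣ-descending sequences in A without lower bound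
  r.C.Countable ∧
  (∀ a ∈ r.C, (∀ n, a n ∈ r.A) ∧ (∀ n, r.lt (a (n + 1)) (a n)) ∧
    ¬ ∃ z ∈ r.A, ∀ n, r.leR z (a n)) ∧
  -- (6) F is a (partial) function whose domain consists exactly of the pairs
  -- (⟨aₙ⟩, (p,q)) with ⟨aₙ⟩ ∈ C, (p,q) ∈ B, p ≥ a₀, satisfying (*)
  (∀ x ∈ r.F, x.1 ∈ r.C ∧ x.2.1 ∈ r.B ∧ x.1 0 ≤ x.2.1.1) ∧
  (∀ a pq, a ∈ r.C → pq ∈ r.B → a 0 ≤ pq.1 → ∃! m : ℕ, (a, pq, m) ∈ r.F) ∧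
  (∀ a pq m, (a, pq, m) ∈ r.F →
    ∀ p'q' ∈ r.B, r.leR p'q'.1 pq.1 → pq.2 ⊆ p'q'.2 →
      r.lt p'q'.1 (a m) → ∃ k, r.Incomp p'q'.1 (a k))

/-- `Ext r s`: `r ≤_R s`, i.e. `r` is stronger than `s`. -/
def Ext (r s : Quad) : Prop :=
  s.A ⊆ r.A ∧
  (∀ a ∈ s.A, ∀ b ∈ s.A, (r.lt a b ↔ s.lt a b)) ∧
  (∀ a ∈ s.A, ∀ b ∈ s.A, (r.Incomp a b ↔ s.Incomp a b)) ∧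
  s.B ⊆ r.B ∧ s.C ⊆ r.C ∧ s.F ⊆ r.F

end Quad

open Quad

/-- Push a `Col`-function forward along a map of ordinals (acting on the range). -/
def mapCol (f : Ordinal → Ordinal) (q : ColFun) : ColFun :=
  {x | ∃ a b, (a, b) ∈ q ∧ x = (a, f b)}

/-- The amalgamation setting: a sequence of conditions forming a Δ-system with root `D`,
a commutative system of isomorphisms `π`, and descending chains `cⁿ` matched by `π`. -/
structure Amalg where
  r : ℕ → Quad
  cond : ∀ n, (r n).IsCond
  D : Set Ordinal
  inter : ∀ m n : ℕ, m < n → (r m).A ∩ (r n).A = D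
  supD_lt : ∀ m : ℕ, ∀ x ∈ (r m).A \ D, sSup D < x
  supA_lt : ∀ m n : ℕ, m < n → ∀ x ∈ (r n).A \ D, sSup (r m).A < x
  lt_agree : ∀ m n : ℕ, ∀ a ∈ D, ∀ b ∈ D, ((r m).lt a b ↔ (r n).lt a b)
  incomp_agree : ∀ m n : ℕ, ∀ a ∈ D, ∀ b ∈ D, ((r m).Incomp a b ↔ (r n).Incomp a b)
  B_agree : ∀ m n : ℕ, ∀ pq : Ordinal × ColFun, pq.1 ∈ D → IsColFun D pq.2 →
    (pq ∈ (r m).B ↔ pq ∈ (r n).B)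
  C_agree : ∀ m n : ℕ, ∀ a : ℕ → Ordinal, (∀ k, a k ∈ D) → (a ∈ (r m).C ↔ a ∈ (r n).C)
  pi : ℕ → ℕ → Ordinal → Ordinal
  pi_mem : ∀ m n : ℕ, ∀ x ∈ (r m).A, pi m n x ∈ (r n).A
  pi_id : ∀ m : ℕ, ∀ x ∈ (r m).A, pi m m x = x
  pi_inv : ∀ m n : ℕ, ∀ x ∈ (r m).A, pi n m (pi m n x) = x
  pi_comm : ∀ m n k : ℕ, ∀ x ∈ (r m).A, pi n k (pi m n x) = pi m k x
  pi_idD : ∀ m n : ℕ, ∀ x ∈ D, pi m n x = x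
  pi_iso : ∀ m n : ℕ, ∀ x ∈ (r m).A, ∀ y ∈ (r m).A,
    ((r m).lt x y ↔ (r n).lt (pi m n x) (pi m n y))
  pi_B : ∀ m n : ℕ, ∀ pq ∈ (r m).B, (pi m n pq.1, mapCol (pi m n) pq.2) ∈ (r n).B
  pi_C : ∀ m n : ℕ, ∀ a ∈ (r m).C, (fun k => pi m n (a k)) ∈ (r n).C
  pi_F : ∀ m n : ℕ, ∀ x ∈ (r m).F,
    ((fun k => pi m n (x.1 k)), (pi m n x.2.1.1, mapCol (pi m n) x.2.1.2), x.2.2) ∈ (r n).F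
  c : ℕ → ℕ → Ordinal
  c_mem : ∀ n k : ℕ, c n k ∈ (r n).A \ D
  c_dec : ∀ n k : ℕ, (r n).lt (c n (k + 1)) (c n k)
  pi_c : ∀ m n k : ℕ, pi m n (c m k) = c n k

namespace Amalg

/-- `A_t = ⋃ₙ Aₙ`. -/
def At (S : Amalg) : Set Ordinal := ⋃ n, (S.r n).A

/-- `<_t`: the transitive closure of the union of the `<ₙ` together with the pairs
`aⁿ⁺¹ₙ₊₁ <_t bⁿₙ` (recall `aⁿₖ = cⁿ₂ₖ` and `bⁿₖ = cⁿ₂ₖ₊₁`). -/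
def ltT (S : Amalg) : Ordinal → Ordinal → Prop :=
  Relation.TransGen (fun x y =>
    (∃ n, (S.r n).lt x y) ∨ ∃ n : ℕ, x = S.c (n + 1) (2 * (n + 1)) ∧ y = S.c n (2 * n + 1))

/-- `x ≤_t y`. -/
def leT (S : Amalg) (x y : Ordinal) : Prop := S.ltT x y ∨ x = y

/-- `x` and `y` are compatible in `<_t`. -/
def CompatT (S : Amalg) (x y : Ordinal) : Prop := ∃ z ∈ S.At, S.leT z x ∧ S.leT z y

variable (S : Amalg)

lemma D_subset (n : ℕ) : S.D ⊆ (S.r n).A := by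
  rw [← S.inter n (n + 1) (Nat.lt_succ_self n)]
  exact Set.inter_subset_left

lemma bddD : BddAbove S.D :=
  ⟨(aleph 2).ord, fun x hx => le_of_lt ((S.cond 0).2.1 x (S.D_subset 0 hx))⟩

lemma level_unique {x : Ordinal} {m n : ℕ} (hm : x ∈ (S.r m).A) (hn : x ∈ (S.r n).A)
    (hx : x ∉ S.D) : m = n := by
  by_contra h
  rcases lt_trichotomy m n with h' | h' | h'
  · exact hx (by rw [← S.inter m n h']; exact ⟨hm, hn⟩)
  · exact h h'
  · exact hx (by rw [← S.inter n m h']; exact ⟨hn, hm⟩)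

lemma D_not_below {z x : Ordinal} {m : ℕ} (hz : z ∈ S.D) (hx : x ∈ (S.r m).A)
    (hxD : x ∉ S.D) (h : (S.r m).lt z x) : False := by
  obtain ⟨-, -, -, -, hord, -⟩ := S.cond m
  have h1 : x < z := hord x z h
  have h2 : sSup S.D < x := S.supD_lt m x ⟨hx, hxD⟩
  have h3 : z ≤ sSup S.D := le_csSup S.bddD hz
  exact lt_asymm (h3.trans_lt h2) h1

lemma leR_trans {m : ℕ} {x y z : Ordinal} (h1 : (S.r m).leR x y) (h2 : (S.r m).leR y z) :
    (S.r m).leR x z := by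
  obtain ⟨-, -, -, htr, -⟩ := S.cond m
  rcases h1 with h1 | rfl
  · rcases h2 with h2 | rfl
    · exact Or.inl (htr _ _ _ h1 h2)
    · exact Or.inl h1
  · exact h2

lemma chain_leR (m : ℕ) {i j : ℕ} (h : i ≤ j) : (S.r m).leR (S.c m j) (S.c m i) := by
  induction j with
  | zero =>
    have : i = 0 := Nat.le_zero.1 h
    subst this; exact Or.inr rfl
  | succ j ih =>
    rcases Nat.lt_or_ge i (j + 1) with h' | h'
    · exact S.leR_trans (Or.inl (S.c_dec m j)) (ih (Nat.lt_succ_iff.1 h'))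
    · have : i = j + 1 := le_antisymm h h'
      subst this; exact Or.inr rfl

lemma keyC {z y : Ordinal} (h : S.ltT z y) :
    ∃ m n : ℕ, z ∈ (S.r m).A ∧ y ∈ (S.r n).A ∧
      ((m = n ∧ (S.r m).lt z y) ∨
       (n < m ∧ (S.r m).leR z (S.c m (2 * m)) ∧ (S.r n).leR (S.c n (2 * n + 1)) y)) := by
  induction h using Relation.TransGen.head_induction_on with
  | @single z hzy =>
    rcases hzy with ⟨k, hk⟩ | ⟨j, hx, hy⟩
    · obtain ⟨-, -, hdom, -⟩ := S.cond k
      obtain ⟨hz, hy⟩ := hdom _ _ hk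
      exact ⟨k, k, hz, hy, Or.inl ⟨rfl, hk⟩⟩
    · subst hx; subst hy
      exact ⟨j + 1, j, (S.c_mem (j + 1) (2 * (j + 1))).1, (S.c_mem j (2 * j + 1)).1,
        Or.inr ⟨Nat.lt_succ_self j, Or.inr rfl, Or.inr rfl⟩⟩
  | @head z w hzw hwy IH =>
    obtain ⟨m', n', hwA, hyA, hcase⟩ := IH
    rcases hzw with ⟨k, hk⟩ | ⟨j, hx, hw⟩
    · obtain ⟨-, -, hdomk, htrk, -⟩ := S.cond k
      obtain ⟨hzk, hwk⟩ := hdomk _ _ hk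
      by_cases hwD : w ∈ S.D
      · rcases hcase with ⟨rfl, hlt⟩ | ⟨hnm, hzc, hcy⟩
        · by_cases hyD : y ∈ S.D
          · have hwy' : (S.r k).lt w y := (S.lt_agree _ k w hwD y hyD).1 hlt
            have hzy : (S.r k).lt z y := htrk _ _ _ hk hwy'
            exact ⟨k, k, hzk, (hdomk _ _ hzy).2, Or.inl ⟨rfl, hzy⟩⟩
          · exact (S.D_not_below hwD hyA hyD hlt).elim
        · rcases hzc with hlt | heq
          · exact (S.D_not_below hwD (S.c_mem m' (2 * m')).1 (S.c_mem m' (2 * m')).2 hlt).elim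
          · exact ((S.c_mem m' (2 * m')).2 (heq ▸ hwD)).elim
      · have hm'k : m' = k := S.level_unique hwA hwk hwD
        subst hm'k
        rcases hcase with ⟨hmn, hlt⟩ | ⟨hnm, hzc, hcy⟩
        · subst hmn
          exact ⟨m', m', hzk, hyA, Or.inl ⟨rfl, htrk _ _ _ hk hlt⟩⟩
        · exact ⟨m', n', hzk, hyA, Or.inr ⟨hnm, S.leR_trans (Or.inl hk) hzc, hcy⟩⟩
    · subst hx; subst hw
      have hcm := S.c_mem j (2 * j + 1)
      have hm'j : m' = j := S.level_unique hwA hcm.1 hcm.2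
      subst hm'j
      rcases hcase with ⟨hmn, hlt⟩ | ⟨hnm, hzc, hcy⟩
      · subst hmn
        exact ⟨m' + 1, m', (S.c_mem (m' + 1) (2 * (m' + 1))).1, hyA,
          Or.inr ⟨Nat.lt_succ_self m', Or.inr rfl, Or.inl hlt⟩⟩
      · exact ⟨m' + 1, n', (S.c_mem (m' + 1) (2 * (m' + 1))).1, hyA,
          Or.inr ⟨Nat.lt_trans hnm (Nat.lt_succ_self m'), Or.inr rfl, hcy⟩⟩

lemma noLB_C (n : ℕ) (a : ℕ → Ordinal) (ha : a ∈ (S.r n).C) :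
    ¬ ∃ z ∈ S.At, ∀ k, S.leT z (a k) := by
  rintro ⟨z, hzAt, hz⟩
  obtain ⟨-, -, -, -, -, -, -, -, hC9, -⟩ := S.cond n
  obtain ⟨haA, hadec, hanolb⟩ := hC9 a ha
  have hz' : ∀ k, S.ltT z (a k) := by
    intro k
    rcases hz (k + 1) with h | rfl
    · exact h.trans (Relation.TransGen.single (Or.inl ⟨n, hadec k⟩))
    · exact Relation.TransGen.single (Or.inl ⟨n, hadec k⟩)
  obtain ⟨m₀, hzm₀⟩ := Set.mem_iUnion.1 hzAt
  by_cases hzD : z ∈ S.D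
  · refine hanolb ⟨z, S.D_subset n hzD, fun k => ?_⟩
    obtain ⟨m, n', hzA, hakA, hcase⟩ := S.keyC (hz' k)
    rcases hcase with ⟨hmn, hlt⟩ | ⟨-, hzc, -⟩
    · subst hmn
      by_cases hakD : a k ∈ S.D
      · exact Or.inl ((S.lt_agree m n z hzD (a k) hakD).1 hlt)
      · have hmn2 : m = n := S.level_unique hakA (haA k) hakD
        subst hmn2
        exact Or.inl hlt
    · rcases hzc with hlt | heq
      · exact (S.D_not_below hzD (S.c_mem m (2 * m)).1 (S.c_mem m (2 * m)).2 hlt).elim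
      · exact ((S.c_mem m (2 * m)).2 (heq ▸ hzD)).elim
  · have ha' : (fun k => S.pi n m₀ (a k)) ∈ (S.r m₀).C := S.pi_C n m₀ a ha
    obtain ⟨-, -, -, -, -, -, -, -, hC9m, -⟩ := S.cond m₀
    refine (hC9m _ ha').2.2 ⟨z, hzm₀, fun k => ?_⟩
    obtain ⟨m, n', hzA, hakA, hcase⟩ := S.keyC (hz' k)
    have hm : m = m₀ := S.level_unique hzA hzm₀ hzD
    subst hm
    rcases hcase with ⟨hmn, hlt⟩ | ⟨hn'm, hzc, hcy⟩
    · subst hmn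
      by_cases hakD : a k ∈ S.D
      · show (S.r m).leR z (S.pi n m (a k))
        rw [S.pi_idD n m (a k) hakD]
        exact Or.inl hlt
      · have hmn2 : m = n := S.level_unique hakA (haA k) hakD
        show (S.r m).leR z (S.pi n m (a k))
        rw [show S.pi n m (a k) = a k by rw [← hmn2]; exact S.pi_id m (a k) (hmn2 ▸ haA k)]
        exact Or.inl hlt
    · have hakn' : a k ∈ (S.r n').A := hakA
      have h2 : (S.r m).leR (S.c m (2 * n' + 1)) (S.pi n' m (a k)) := by
        rcases hcy with hlt | heq
        · have hh := (S.pi_iso n' m (S.c n' (2 * n' + 1)) (S.c_mem n' (2 * n' + 1)).1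
            (a k) hakn').1 hlt
          rw [S.pi_c n' m (2 * n' + 1)] at hh
          exact Or.inl hh
        · exact Or.inr (by rw [← heq, S.pi_c])
      have h3 : S.pi n' m (a k) = S.pi n m (a k) := by
        by_cases hakD : a k ∈ S.D
        · rw [S.pi_idD n' m _ hakD, S.pi_idD n m _ hakD]
        · have : n' = n := S.level_unique hakn' (haA k) hakD
          rw [this]
      have h4 : (S.r m).leR (S.c m (2 * m)) (S.c m (2 * n' + 1)) := S.chain_leR m (by omega)
      show (S.r m).leR z (S.pi n m (a k))
      rw [← h3]
      exact S.leR_trans (S.leR_trans hzc h4) h2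

lemma u_dec (k : ℕ) : S.ltT (S.c ((k + 1) / 2) (k + 1)) (S.c (k / 2) k) := by
  rcases Nat.even_or_odd k with ⟨t, ht⟩ | ⟨t, ht⟩
  · subst ht
    have h1 : (t + t + 1) / 2 = t := by omega
    have h2 : (t + t) / 2 = t := by omega
    rw [h1, h2]
    exact Relation.TransGen.single (Or.inl ⟨t, S.c_dec t (t + t)⟩)
  · subst ht
    have h1 : (2 * t + 1 + 1) / 2 = t + 1 := by omega
    have h2 : (2 * t + 1) / 2 = t := by omega
    rw [h1, h2]
    refine Relation.TransGen.single (Or.inr ⟨t, ?_, rfl⟩)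
    congr 1

lemma noLB_u : ¬ ∃ z ∈ S.At, ∀ k : ℕ, S.leT z (S.c (k / 2) k) := by
  rintro ⟨z, hzAt, hz⟩
  obtain ⟨m₀, hzm₀⟩ := Set.mem_iUnion.1 hzAt
  by_cases hzD : z ∈ S.D
  · have h0 := hz 0
    rw [Nat.zero_div] at h0
    rcases h0 with h | heq
    · obtain ⟨m, n', hzA, hyA, hcase⟩ := S.keyC h
      rcases hcase with ⟨rfl, hlt⟩ | ⟨-, hzc, -⟩
      · exact S.D_not_below hzD hyA (S.c_mem 0 0).2 hlt
      · rcases hzc with hlt | heq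
        · exact S.D_not_below hzD (S.c_mem m (2 * m)).1 (S.c_mem m (2 * m)).2 hlt
        · exact (S.c_mem m (2 * m)).2 (heq ▸ hzD)
    · exact (S.c_mem 0 0).2 (heq ▸ hzD)
  · have hk2 : 2 * (m₀ + 1) / 2 = m₀ + 1 := by omega
    have h := hz (2 * (m₀ + 1))
    rw [hk2] at h
    rcases h with h | heq
    · obtain ⟨m, n', hzA, hyA, hcase⟩ := S.keyC h
      have hm : m = m₀ := S.level_unique hzA hzm₀ hzD
      have hy' := S.c_mem (m₀ + 1) (2 * (m₀ + 1))
      have hn : n' = m₀ + 1 := S.level_unique hyA hy'.1 hy'.2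
      rcases hcase with ⟨hmn, -⟩ | ⟨hn'm, -, -⟩ <;> omega
    · have hy' := S.c_mem (m₀ + 1) (2 * (m₀ + 1))
      have : m₀ + 1 = m₀ := S.level_unique (heq ▸ hy'.1) hzm₀ hzD
      omega

end Amalg

/-- (a) Every `⟨aₖ⟩ ∈ Cₙ` has no lower bound in `(A_t, <_t)`; (b) the diagonal sequence
`u₂ₙ = aⁿₙ, u₂ₙ₊₁ = bⁿₙ` (i.e. `uₖ = c (k/2) k`) is strictly `<_t`-descending and has
no lower bound in `(A_t, <_t)`. -/
theorem stmt9 (S : Amalg) :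
    (∀ n : ℕ, ∀ a ∈ (S.r n).C, ¬ ∃ z ∈ S.At, ∀ k, S.leT z (a k)) ∧
    (∀ k : ℕ, S.ltT (S.c ((k + 1) / 2) (k + 1)) (S.c (k / 2) k)) ∧
    ¬ ∃ z ∈ S.At, ∀ k : ℕ, S.leT z (S.c (k / 2) k) := by
  exact ⟨fun n a ha => S.noLB_C n a ha, S.u_dec, S.noLB_u⟩
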